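/- The softmax function σ : ℝ^c → ℝ^c, σ(a)_k = exp(a_k)/Σ_l exp(a_l), is Lipschitz continuous with respect to the Euclidean norm with Lipschitz constant at most 1. -/

import Mathlib

noncomputable def softmax {c : ℕ} (a : EuclideanSpace ℝ (Fin c)) :
    EuclideanSpace ℝ (Fin c) :=
  WithLp.toLp 2 (fun k => Real.exp (a k) / ∑ l : Fin c, Real.exp (a l))

variable {c : ℕ}

/-- The candidate derivative of softmax at a point with softmax value `w`, as a linear map. -/
noncomputable def softmaxDerivLin (w : Fin c → ℝ) :
    EuclideanSpace ℝ (Fin c) →ₗ[ℝ] EuclideanSpace ℝ (Fin c) where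
  toFun v := WithLp.toLp 2 (fun k => w k * (v k - ∑ l, w l * v l))
  map_add' v u := by
    ext k
    show w k * ((v k + u k) - ∑ l, w l * (v l + u l)) = _
    simp only [mul_add, Finset.sum_add_distrib]
    show _ = w k * (v k - ∑ l, w l * v l) + w k * (u k - ∑ l, w l * u l)
    ring
  map_smul' r v := by
    ext k
    show w k * (r * v k - ∑ l, w l * (r * v l)) = r * (w k * (v k - ∑ l, w l * v l))
    rw [show (∑ l, w l * (r * v l)) = r * ∑ l, w l * v l from by
      rw [Finset.mul_sum]; exact Finset.sum_congr rfl fun l _ => by ring]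
    ring

/-- The candidate derivative as a continuous linear map. -/
noncomputable def softmaxDeriv (w : Fin c → ℝ) :
    EuclideanSpace ℝ (Fin c) →L[ℝ] EuclideanSpace ℝ (Fin c) :=
  LinearMap.toContinuousLinearMap (softmaxDerivLin w)

lemma softmaxDeriv_apply (w : Fin c → ℝ) (v : EuclideanSpace ℝ (Fin c)) (k : Fin c) :
    softmaxDeriv w v k = w k * (v k - ∑ l, w l * v l) := rfl

lemma softmaxDeriv_norm_le (w : Fin c → ℝ) (hw0 : ∀ k, 0 ≤ w k) (hw1 : ∑ k, w k = 1) :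
    ‖softmaxDeriv w‖ ≤ 1 := by
  refine ContinuousLinearMap.opNorm_le_bound _ zero_le_one fun v => ?_
  rw [one_mul]
  have hwle : ∀ k, w k ≤ 1 := by
    intro k
    calc w k ≤ ∑ l, w l := Finset.single_le_sum (fun l _ => hw0 l) (Finset.mem_univ k)
    _ = 1 := hw1
  set m := ∑ l, w l * v l with hm
  have key : ∑ k, (w k * (v k - m)) ^ 2 ≤ ∑ k, (v k) ^ 2 := by
    have step1 : ∑ k, (w k * (v k - m)) ^ 2 ≤ ∑ k, w k * (v k - m) ^ 2 := by
      refine Finset.sum_le_sum fun k _ => ?_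
      have hsq : w k ^ 2 ≤ w k := by nlinarith [hw0 k, hwle k]
      calc (w k * (v k - m)) ^ 2 = w k ^ 2 * (v k - m) ^ 2 := by ring
        _ ≤ w k * (v k - m) ^ 2 := mul_le_mul_of_nonneg_right hsq (sq_nonneg _)
    have step2 : ∑ k, w k * (v k - m) ^ 2 = (∑ k, w k * (v k) ^ 2) - m ^ 2 := by
      have expand : ∀ k ∈ Finset.univ, w k * (v k - m) ^ 2
          = w k * (v k) ^ 2 - (2 * m) * (w k * v k) + m ^ 2 * w k := fun k _ => by ring
      rw [Finset.sum_congr rfl expand, Finset.sum_add_distrib, Finset.sum_sub_distrib,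
        ← Finset.mul_sum, ← Finset.mul_sum, hw1, ← hm]
      ring
    have step3 : (∑ k, w k * (v k) ^ 2) - m ^ 2 ≤ ∑ k, (v k) ^ 2 := by
      have : ∑ k, w k * (v k) ^ 2 ≤ ∑ k, (v k) ^ 2 := by
        refine Finset.sum_le_sum fun k _ => ?_
        nlinarith [hwle k, sq_nonneg (v k)]
      nlinarith [sq_nonneg m]
    linarith
  rw [EuclideanSpace.norm_eq, EuclideanSpace.norm_eq]
  simp only [Real.norm_eq_abs, sq_abs]
  exact Real.sqrt_le_sqrt key

lemma softmax_nonneg (x : EuclideanSpace ℝ (Fin c)) (k : Fin c) : 0 ≤ softmax x k := by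
  unfold softmax
  show 0 ≤ Real.exp (x k) / ∑ l, Real.exp (x l)
  positivity

lemma softmax_sum (hc : 0 < c) (x : EuclideanSpace ℝ (Fin c)) :
    ∑ k, softmax x k = 1 := by
  have : Nonempty (Fin c) := Fin.pos_iff_nonempty.mp hc
  have hS : 0 < ∑ l, Real.exp (x l) :=
    Finset.sum_pos (fun _ _ => Real.exp_pos _) Finset.univ_nonempty
  unfold softmax
  show ∑ k, Real.exp (x k) / ∑ l, Real.exp (x l) = 1
  rw [← Finset.sum_div, div_self hS.ne']

lemma hasFDerivWithinAt_softmax (hc : 0 < c) (x : EuclideanSpace ℝ (Fin c)) :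
    HasFDerivWithinAt softmax (softmaxDeriv (softmax x)) Set.univ x := by
  have : Nonempty (Fin c) := Fin.pos_iff_nonempty.mp hc
  have hS : 0 < ∑ l, Real.exp (x l) :=
    Finset.sum_pos (fun _ _ => Real.exp_pos _) Finset.univ_nonempty
  rw [hasFDerivWithinAt_piLp 2]
  intro k
  have h1 : HasFDerivWithinAt (fun y : EuclideanSpace ℝ (Fin c) => Real.exp (y k))
      (Real.exp (x k) • PiLp.proj 2 (fun _ : Fin c => ℝ) k) Set.univ x :=
    ((PiLp.hasFDerivAt_apply 2 x k).hasFDerivWithinAt).exp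
  have h2 : HasFDerivWithinAt (fun y : EuclideanSpace ℝ (Fin c) => ∑ l, Real.exp (y l))
      (∑ l, Real.exp (x l) • PiLp.proj 2 (fun _ : Fin c => ℝ) l) Set.univ x :=
    HasFDerivWithinAt.fun_sum fun l _ =>
      ((PiLp.hasFDerivAt_apply 2 x l).hasFDerivWithinAt).exp
  have hinv : HasFDerivWithinAt (fun y : EuclideanSpace ℝ (Fin c) => (∑ l, Real.exp (y l))⁻¹)
      ((-((∑ l, Real.exp (x l)) ^ 2)⁻¹) •
        (∑ l, Real.exp (x l) • PiLp.proj 2 (fun _ : Fin c => ℝ) l)) Set.univ x :=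
    (hasDerivAt_inv hS.ne').comp_hasFDerivWithinAt x h2
  have h := h1.fun_mul hinv
  have hfun : (fun y : EuclideanSpace ℝ (Fin c) => softmax y k)
      = fun y : EuclideanSpace ℝ (Fin c) =>
        Real.exp (y k) * (∑ l, Real.exp (y l))⁻¹ := by
    funext y
    simp [softmax, div_eq_mul_inv]
  rw [hfun]
  refine h.congr_fderiv ?_
  ext v
  simp only [ContinuousLinearMap.comp_apply, ContinuousLinearMap.coe_coe,
    ContinuousLinearMap.add_apply, ContinuousLinearMap.smul_apply,
    ContinuousLinearMap.sum_apply, PiLp.proj_apply, smul_eq_mul]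
  rw [softmaxDeriv_apply]
  unfold softmax
  have hsum : ∑ l, Real.exp (x l) / (∑ j, Real.exp (x j)) * v l
      = (∑ l, Real.exp (x l) * v l) / (∑ j, Real.exp (x j)) := by
    rw [Finset.sum_div]
    exact Finset.sum_congr rfl fun l _ => by ring
  rw [hsum]
  field_simp
  ring

theorem softmax_lipschitz_le_one {c : ℕ} (a b : EuclideanSpace ℝ (Fin c)) :
    ‖softmax a - softmax b‖ ≤ ‖a - b‖ := by
  rcases Nat.eq_zero_or_pos c with hc | hc
  · subst hc
    have : softmax a - softmax b = 0 := Subsingleton.elim _ _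
    rw [this, norm_zero]
    exact norm_nonneg _
  · have := Convex.norm_image_sub_le_of_norm_hasFDerivWithin_le
      (f := softmax) (f' := fun x => softmaxDeriv (softmax x)) (C := 1) (s := Set.univ)
      (fun x _ => hasFDerivWithinAt_softmax hc x)
      (fun x _ => softmaxDeriv_norm_le _ (softmax_nonneg x) (softmax_sum hc x))
      convex_univ (Set.mem_univ b) (Set.mem_univ a)
    simpa using this
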